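/- Let s ∈ (0,1]. There exists a constant C, depending only on s, with the following property. Let n ≥ 1, let Ω ⊂ ℝⁿ be an open set, write d(x) = dist(x, ℝⁿ∖Ω), and let C₀ ≥ 0. Suppose u : ℝⁿ → ℝ vanishes on ℝⁿ∖Ω and satisfies: (i) |u(x)| ≤ C₀ d(x)ˢ for every x ∈ Ω, and (ii) |u(x) − u(y)| ≤ C₀ |x−y|ˢ for every x ∈ Ω and every y with |y−x| ≤ d(x)/2. Then |u(x) − u(y)| ≤ C·C₀·|x−y|ˢ for all x, y ∈ ℝⁿ; that is, u is globally s-Hölder continuous with seminorm controlled by C₀. -/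
import Mathlib


open MeasureTheory

/-- Patching lemma: an interior Hölder estimate at scale `d(x)/2` together with the
growth bound `|u| ≤ C₀ dˢ` yields a global `s`-Hölder estimate, with a constant
depending only on `s`. -/
theorem global_Holder_patching (s : ℝ) (hs0 : 0 < s) (hs1 : s ≤ 1) :
    ∃ C : ℝ, 0 < C ∧
      ∀ (n : ℕ), 1 ≤ n →
      ∀ Ω : Set (EuclideanSpace ℝ (Fin n)), IsOpen Ω →
      ∀ C₀ : ℝ, 0 ≤ C₀ →
      ∀ u : EuclideanSpace ℝ (Fin n) → ℝ,
        (∀ x ∉ Ω, u x = 0) →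
        (∀ x ∈ Ω, |u x| ≤ C₀ * Metric.infDist x Ωᶜ ^ s) →
        (∀ x ∈ Ω, ∀ y : EuclideanSpace ℝ (Fin n),
          dist y x ≤ Metric.infDist x Ωᶜ / 2 → |u x - u y| ≤ C₀ * dist x y ^ s) →
        ∀ x y : EuclideanSpace ℝ (Fin n), |u x - u y| ≤ C * C₀ * dist x y ^ s := by
  refine ⟨5, by norm_num, ?_⟩
  intro n hn Ω hΩ C₀ hC₀ u hu0 hgrow hint
  have key : ∀ x y : EuclideanSpace ℝ (Fin n), x ∈ Ω →
      |u x - u y| ≤ 5 * C₀ * dist x y ^ s := by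
    intro x y hx
    set D := dist x y with hD
    have hD0 : 0 ≤ D := dist_nonneg
    have hDs0 : 0 ≤ D ^ s := Real.rpow_nonneg hD0 s
    by_cases h : dist y x ≤ Metric.infDist x Ωᶜ / 2
    · have h1 := hint x hx y h
      nlinarith [mul_nonneg hC₀ hDs0]
    · push_neg at h
      have hd0 : 0 ≤ Metric.infDist x Ωᶜ := Metric.infDist_nonneg
      have hdx : Metric.infDist x Ωᶜ ≤ 2 * D := by
        rw [dist_comm y x] at h; linarith
      have h2s : (2:ℝ) ^ s ≤ 2 := by
        calc (2:ℝ) ^ s ≤ (2:ℝ) ^ (1:ℝ) :=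
              Real.rpow_le_rpow_of_exponent_le (by norm_num) hs1
          _ = 2 := Real.rpow_one 2
      have h3s : (3:ℝ) ^ s ≤ 3 := by
        calc (3:ℝ) ^ s ≤ (3:ℝ) ^ (1:ℝ) :=
              Real.rpow_le_rpow_of_exponent_le (by norm_num) hs1
          _ = 3 := Real.rpow_one 3
      have hux : |u x| ≤ 2 * C₀ * D ^ s := by
        have := hgrow x hx
        have h1 : Metric.infDist x Ωᶜ ^ s ≤ (2 * D) ^ s :=
          Real.rpow_le_rpow hd0 hdx hs0.le
        have h2 : (2 * D) ^ s = 2 ^ s * D ^ s := Real.mul_rpow (by norm_num) hD0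
        calc |u x| ≤ C₀ * Metric.infDist x Ωᶜ ^ s := this
          _ ≤ C₀ * ((2:ℝ) ^ s * D ^ s) := by
              rw [← h2]; exact mul_le_mul_of_nonneg_left h1 hC₀
          _ ≤ C₀ * (2 * D ^ s) :=
              mul_le_mul_of_nonneg_left (mul_le_mul_of_nonneg_right h2s hDs0) hC₀
          _ = 2 * C₀ * D ^ s := by ring
      have huy : |u y| ≤ 3 * C₀ * D ^ s := by
        by_cases hy : y ∈ Ω
        · have hdy : Metric.infDist y Ωᶜ ≤ 3 * D := by
            have h1 : Metric.infDist y Ωᶜ ≤ Metric.infDist x Ωᶜ + dist y x :=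
              Metric.infDist_le_infDist_add_dist
            rw [dist_comm y x] at h1
            linarith
          have hdy0 : 0 ≤ Metric.infDist y Ωᶜ := Metric.infDist_nonneg
          have h1 : Metric.infDist y Ωᶜ ^ s ≤ (3 * D) ^ s :=
            Real.rpow_le_rpow hdy0 hdy hs0.le
          have h2 : (3 * D) ^ s = 3 ^ s * D ^ s := Real.mul_rpow (by norm_num) hD0
          calc |u y| ≤ C₀ * Metric.infDist y Ωᶜ ^ s := hgrow y hy
            _ ≤ C₀ * ((3:ℝ) ^ s * D ^ s) := by
                rw [← h2]; exact mul_le_mul_of_nonneg_left h1 hC₀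
            _ ≤ C₀ * (3 * D ^ s) :=
                mul_le_mul_of_nonneg_left (mul_le_mul_of_nonneg_right h3s hDs0) hC₀
            _ = 3 * C₀ * D ^ s := by ring
        · rw [hu0 y hy]; simp
          positivity
      calc |u x - u y| ≤ |u x| + |u y| := abs_sub _ _
        _ ≤ 5 * C₀ * D ^ s := by linarith
  intro x y
  by_cases hx : x ∈ Ω
  · exact key x y hx
  · by_cases hy : y ∈ Ω
    · rw [abs_sub_comm, dist_comm]
      exact key y x hy
    · rw [hu0 x hx, hu0 y hy]
      simp
      positivity
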